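/- arXiv:1308.2047 — 2 statements merged into one kernel-verified Lean document; each statement's English description precedes it below -/
import Mathlib

section
/- Let λ, μ, λ′, μ′ be typical weights with λ+μ = λ′+μ′ and (λ₁+μ₁) + (λ₂+μ₂) = 0. Then there exists an equivariant F-linear isomorphism L(λ)⊗L(μ) → L(λ′)⊗L(μ′), i.e. a linear isomorphism intertwining Δ(E), Δ(F) and Δ(Q(h)) for all h ∈ ℤ². -/
set_option synthInstance.maxHeartbeats 1000000
set_option maxHeartbeats 1000000
noncomputable section
open scoped TensorProduct

abbrev F : Type := RatFunc ℂ
def q : F := RatFunc.X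

/-- The quantum integer [n] = (qⁿ − q⁻ⁿ)/(q − q⁻¹). -/
def qn (n : ℤ) : F := (q ^ n - q ^ (-n)) / (q - q⁻¹)

abbrev V : Type := Fin 2 → F
def v0 : V := Pi.single 0 1
def v1 : V := Pi.single 1 1

def Eop : V →ₗ[F] V := Matrix.toLin' !![0, 1; 0, 0]
def Fop (l : ℤ × ℤ) : V →ₗ[F] V := Matrix.toLin' !![0, 0; qn (l.1 + l.2), 0]
def Qop (l : ℤ × ℤ) (h : ℤ × ℤ) : V →ₗ[F] V :=
  Matrix.toLin' !![q ^ (h.1 * l.1 + h.2 * l.2), 0; 0, q ^ (h.1 * (l.1 - 1) + h.2 * (l.2 + 1))]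
def Pop (l : ℤ × ℤ) : V →ₗ[F] V :=
  Matrix.toLin' !![(-1 : F) ^ l.2, 0; 0, (-1 : F) ^ (l.2 + 1)]
def Kop (l : ℤ × ℤ) : V →ₗ[F] V := Qop l (1, 1)
def Kinv (l : ℤ × ℤ) : V →ₗ[F] V := Qop l (-1, -1)

def ΔE (l m : ℤ × ℤ) : V ⊗[F] V →ₗ[F] V ⊗[F] V :=
  TensorProduct.map Eop (Kinv m) + TensorProduct.map (Pop l) Eop
def ΔF (l m : ℤ × ℤ) : V ⊗[F] V →ₗ[F] V ⊗[F] V :=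
  TensorProduct.map (Fop l) LinearMap.id + TensorProduct.map (Kop l ∘ₗ Pop l) (Fop m)
def ΔQ (l m : ℤ × ℤ) (h : ℤ × ℤ) : V ⊗[F] V →ₗ[F] V ⊗[F] V :=
  TensorProduct.map (Qop l h) (Qop m h)

open Matrix Kronecker

section Abstract

variable {R : Type*} [Field R]

def M_f (γ σ δ : R) : Matrix (Fin 2 × Fin 2) (Fin 2 × Fin 2) R :=
  !![1,0;0,γ] ⊗ₖ !![1,0;0,σ] + !![0,1;0,0] ⊗ₖ !![0,0;δ,0]

def M_E (a s : R) : Matrix (Fin 2 × Fin 2) (Fin 2 × Fin 2) R :=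
  !![(0:R),1;0,0] ⊗ₖ !![a,0;0,a] + !![s,0;0,-s] ⊗ₖ !![0,1;0,0]

def M_F (c a s : R) : Matrix (Fin 2 × Fin 2) (Fin 2 × Fin 2) R :=
  !![(0:R),0;c,0] ⊗ₖ (1 : Matrix (Fin 2) (Fin 2) R)
    + (!![a,0;0,a] * !![s,0;0,-s]) ⊗ₖ !![0,0;-c,0]

def M_Q (u0 u1 w0 w1 : R) : Matrix (Fin 2 × Fin 2) (Fin 2 × Fin 2) R :=
  !![u0,0;0,u1] ⊗ₖ !![w0,0;0,w1]

lemma keyE (a a' s s' γ : R) (hs : s*s=1) (hs' : s'*s'=1) :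
    M_f γ (s*s') (a*s*(s*s') - a'*s'*γ) * M_E a s
      = M_E a' s' * M_f γ (s*s') (a*s*(s*s') - a'*s'*γ) := by
  unfold M_f M_E
  ext ⟨i1,i2⟩ ⟨j1,j2⟩
  fin_cases i1 <;> fin_cases i2 <;> fin_cases j1 <;> fin_cases j2 <;>
    simp [Matrix.mul_apply, Fintype.sum_prod_type, Fin.sum_univ_two,
      Matrix.kroneckerMap_apply, Matrix.one_apply] <;>
    first
      | ring1
      | linear_combination (-s)*hs'
      | linear_combination (a'*γ - a*s^2)*hs' + (-a)*hs
      | linear_combination (-(s*s'*a))*hs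
      | linear_combination (-(γ*s))*hs'

lemma keyF (a a' s s' c c' γ : R) (hs : s*s=1) (hs' : s'*s'=1) (hγc : γ * c = c') :
    M_f γ (s*s') (a*s*(s*s') - a'*s'*γ) * M_F c a s
      = M_F c' a' s' * M_f γ (s*s') (a*s*(s*s') - a'*s'*γ) := by
  unfold M_f M_F
  ext ⟨i1,i2⟩ ⟨j1,j2⟩
  fin_cases i1 <;> fin_cases i2 <;> fin_cases j1 <;> fin_cases j2 <;>
    simp [Matrix.mul_apply, Fintype.sum_prod_type, Fin.sum_univ_two,
      Matrix.kroneckerMap_apply, Matrix.one_apply] <;>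
    first
      | ring1
      | linear_combination (-(s'*a'))*hγc
      | linear_combination hγc
      | linear_combination (s*s')*hγc
      | linear_combination (s^2*s'*a)*hγc

lemma keyQ (u0 u1 w0 w1 u0' u1' w0' w1' γ σ δ : R)
    (h00 : u0*w0 = u0'*w0') (h01 : u0*w1 = u0'*w1') (h10 : u1*w0 = u1'*w0')
    (h11 : u1*w1 = u1'*w1') (hmid : u1*w0 = u0'*w1') :
    M_f γ σ δ * M_Q u0 u1 w0 w1 = M_Q u0' u1' w0' w1' * M_f γ σ δ := by
  unfold M_f M_Q
  ext ⟨i1,i2⟩ ⟨j1,j2⟩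
  fin_cases i1 <;> fin_cases i2 <;> fin_cases j1 <;> fin_cases j2 <;>
    simp [Matrix.mul_apply, Fintype.sum_prod_type, Fin.sum_univ_two,
      Matrix.kroneckerMap_apply, Matrix.one_apply] <;>
    first
      | ring1
      | linear_combination h00
      | linear_combination σ*h01
      | linear_combination δ*hmid
      | linear_combination γ*h10
      | linear_combination (σ*γ)*h11

lemma keyInv (a a' s s' γ γ' : R) (hs : s*s=1) (hs' : s'*s'=1) (hγγ' : γ * γ' = 1) :
    M_f γ (s*s') (a*s*(s*s') - a'*s'*γ) * M_f γ' (s*s') (a'*s'*(s*s') - a*s*γ') = 1 := by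
  unfold M_f
  ext ⟨i1,i2⟩ ⟨j1,j2⟩
  fin_cases i1 <;> fin_cases i2 <;> fin_cases j1 <;> fin_cases j2 <;>
    simp [Matrix.mul_apply, Fintype.sum_prod_type, Fin.sum_univ_two,
      Matrix.kroneckerMap_apply, Matrix.one_apply] <;>
    first
      | ring1
      | simp [Prod.ext_iff]
      | linear_combination (s'*s')*hs + hs'
      | linear_combination (a'*s'*s'*s')*hs + (a'*s')*hs' - (a'*s')*hγγ'
      | linear_combination hγγ'
      | linear_combination (γ*γ'*s'*s')*hs + (γ*γ')*hs' + hγγ'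

end Abstract

section Inst


lemma q_ne_zero : q ≠ 0 := RatFunc.X_ne_zero

lemma q_pow_nat_ne_one {n : ℕ} (hn : n ≠ 0) : q ^ n ≠ 1 := by
  have hdeg : ∀ k : ℕ, RatFunc.intDegree (q ^ k) = k := by
    intro k
    induction k with
    | zero => simpa using RatFunc.intDegree_one
    | succ k ih =>
      rw [pow_succ, RatFunc.intDegree_mul (pow_ne_zero _ q_ne_zero) q_ne_zero, ih,
        show q = RatFunc.X from rfl, RatFunc.intDegree_X]
      push_cast; ring
  intro h
  have := hdeg n
  rw [h, RatFunc.intDegree_one] at this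
  exact hn (by exact_mod_cast this.symm)

lemma q_zpow_ne_one {k : ℤ} (hk : k ≠ 0) : q ^ k ≠ 1 := by
  rcases lt_trichotomy k 0 with h | h | h
  · intro hq
    have h1 : q ^ (-k) = 1 := by
      rw [_root_.zpow_neg, hq, inv_one]
    have h2 : q ^ ((-k).toNat) ≠ 1 := q_pow_nat_ne_one (by omega)
    rw [← zpow_natCast q ((-k).toNat), Int.toNat_of_nonneg (by omega)] at h2
    exact h2 h1
  · exact absurd h hk
  · intro hq
    have h2 : q ^ (k.toNat) ≠ 1 := q_pow_nat_ne_one (by omega)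
    rw [← zpow_natCast q (k.toNat), Int.toNat_of_nonneg (by omega)] at h2
    exact h2 hq

lemma qden_ne_zero : q - q⁻¹ ≠ 0 := by
  intro h
  have h1 : q = q⁻¹ := sub_eq_zero.mp h
  have h2 : q * q = 1 := by
    nth_rewrite 2 [h1]
    exact mul_inv_cancel₀ q_ne_zero
  have h3 : q ^ (2:ℤ) = 1 := by
    rw [show (2:ℤ) = (1:ℤ)+(1:ℤ) by norm_num, zpow_add₀ q_ne_zero, zpow_one]
    exact h2
  exact q_zpow_ne_one (by norm_num) h3

lemma qn_ne_zero {n : ℤ} (hn : n ≠ 0) : qn n ≠ 0 := by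
  unfold qn
  apply div_ne_zero _ qden_ne_zero
  intro h
  have h1 : q ^ n = q ^ (-n) := sub_eq_zero.mp h
  have h2 : q ^ (n + n) = 1 := by
    rw [zpow_add₀ q_ne_zero]
    nth_rewrite 2 [h1]
    rw [← zpow_add₀ q_ne_zero]
    simp
  exact q_zpow_ne_one (by omega) h2

lemma qn_neg (n : ℤ) : qn (-n) = - qn n := by
  unfold qn
  rw [neg_neg]
  ring

lemma neg_one_ne_zero' : (-1 : F) ≠ 0 := by norm_num

lemma sign_sq (k : ℤ) : ((-1:F) ^ k) * ((-1:F) ^ k) = 1 := by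
  rw [← zpow_add₀ neg_one_ne_zero']
  exact Even.neg_one_zpow ⟨k, rfl⟩

lemma sign_succ (k : ℤ) : (-1:F) ^ (k + 1) = -((-1:F) ^ k) := by
  rw [zpow_add₀ neg_one_ne_zero', zpow_one]
  ring

lemma sign_succ' (k : ℤ) : (-1:F) ^ (1 + k) = -((-1:F) ^ k) := by
  rw [add_comm]
  exact sign_succ k

local notation "bV" => Pi.basisFun F (Fin 2)
local notation "B2" => Module.Basis.tensorProduct (Pi.basisFun F (Fin 2)) (Pi.basisFun F (Fin 2))

lemma tmL (M : Matrix (Fin 2) (Fin 2) F) :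
    LinearMap.toMatrix bV bV (Matrix.toLin' M) = M := by
  rw [← Matrix.toLin_eq_toLin', LinearMap.toMatrix_toLin]

lemma toMatrix_ΔE (l m : ℤ × ℤ) :
    LinearMap.toMatrix B2 B2 (ΔE l m)
      = M_E (q ^ (-(m.1+m.2))) ((-1:F) ^ l.2) := by
  unfold ΔE Eop Kinv Qop Pop M_E
  rw [map_add, TensorProduct.toMatrix_map, TensorProduct.toMatrix_map]
  simp only [tmL]
  ext ⟨i1,i2⟩ ⟨j1,j2⟩
  fin_cases i1 <;> fin_cases i2 <;> fin_cases j1 <;> fin_cases j2 <;>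
    simp [Matrix.kroneckerMap_apply, Matrix.one_apply] <;>
    first
      | rfl
      | ring1
      | (congr 1 <;> ring1)
      | (rw [sign_succ] <;> ring1)
      | (rw [sign_succ'] <;> ring1)


lemma toMatrix_ΔF (l m : ℤ × ℤ) :
    LinearMap.toMatrix B2 B2 (ΔF l m)
      = !![(0:F),0; qn (l.1+l.2),0] ⊗ₖ (1 : Matrix (Fin 2) (Fin 2) F)
        + (!![q ^ (l.1+l.2),0;0,q ^ (l.1+l.2)] * !![(-1:F) ^ l.2,0;0,-((-1:F) ^ l.2)])
            ⊗ₖ !![0,0; qn (m.1+m.2),0] := by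
  unfold ΔF Fop Kop Pop Qop
  rw [map_add, TensorProduct.toMatrix_map, TensorProduct.toMatrix_map,
    LinearMap.toMatrix_comp bV bV bV, LinearMap.toMatrix_id]
  simp only [tmL]
  ext ⟨i1,i2⟩ ⟨j1,j2⟩
  fin_cases i1 <;> fin_cases i2 <;> fin_cases j1 <;> fin_cases j2 <;>
    simp [Matrix.kroneckerMap_apply, Matrix.one_apply] <;>
    first
      | rfl
      | ring1
      | (congr 1 <;> ring1)
      | (rw [sign_succ] <;> ring1)
      | (rw [sign_succ'] <;> ring1)


lemma toMatrix_ΔQ (l m : ℤ × ℤ) (h : ℤ × ℤ) :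
    LinearMap.toMatrix B2 B2 (ΔQ l m h)
      = M_Q (q ^ (h.1*l.1+h.2*l.2)) (q ^ (h.1*(l.1-1)+h.2*(l.2+1)))
          (q ^ (h.1*m.1+h.2*m.2)) (q ^ (h.1*(m.1-1)+h.2*(m.2+1))) := by
  unfold ΔQ Qop M_Q
  rw [TensorProduct.toMatrix_map]
  simp only [tmL]

end Inst



local notation "bV" => Pi.basisFun F (Fin 2)
local notation "B2" => Module.Basis.tensorProduct (Pi.basisFun F (Fin 2)) (Pi.basisFun F (Fin 2))

/-- for typical `λ, μ, λ′, μ′` with `λ+μ = λ′+μ′` atypical,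
`L(λ)⊗L(μ) ≅ L(λ′)⊗L(μ′)` equivariantly. -/
theorem atypical_tensor_iso (l m l' m' : ℤ × ℤ)
    (hl : l.1 + l.2 ≠ 0) (hm : m.1 + m.2 ≠ 0)
    (hl' : l'.1 + l'.2 ≠ 0) (hm' : m'.1 + m'.2 ≠ 0)
    (heq : l + m = l' + m') (hsum : l.1 + m.1 + (l.2 + m.2) = 0) :
    ∃ f : V ⊗[F] V →ₗ[F] V ⊗[F] V, Function.Bijective f ∧
      f ∘ₗ ΔE l m = ΔE l' m' ∘ₗ f ∧
      f ∘ₗ ΔF l m = ΔF l' m' ∘ₗ f ∧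
      ∀ h : ℤ × ℤ, f ∘ₗ ΔQ l m h = ΔQ l' m' h ∘ₗ f := by
  classical
  have h1 : l.1 + m.1 = l'.1 + m'.1 := congrArg Prod.fst heq
  have h2 : l.2 + m.2 = l'.2 + m'.2 := congrArg Prod.snd heq
  set a : F := q ^ (l.1+l.2) with ha
  set a' : F := q ^ (l'.1+l'.2) with ha'
  set s : F := (-1:F) ^ l.2 with hsdef
  set s' : F := (-1:F) ^ l'.2 with hs'def
  set c : F := qn (l.1+l.2) with hc
  set c' : F := qn (l'.1+l'.2) with hc'
  have hc0 : c ≠ 0 := qn_ne_zero hl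
  have hc'0 : c' ≠ 0 := qn_ne_zero hl'
  set γ : F := c'/c with hγ
  set γ' : F := c/c' with hγ'
  have hs : s*s = 1 := sign_sq l.2
  have hs' : s'*s' = 1 := sign_sq l'.2
  have hγc : γ * c = c' := div_mul_cancel₀ c' hc0
  have hγγ' : γ * γ' = 1 := by rw [hγ, hγ']; field_simp
  -- matrices of the operators
  have hME : LinearMap.toMatrix B2 B2 (ΔE l m) = M_E a s := by
    rw [toMatrix_ΔE, show (-(m.1+m.2) : ℤ) = l.1 + l.2 by omega]
  have hME' : LinearMap.toMatrix B2 B2 (ΔE l' m') = M_E a' s' := by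
    rw [toMatrix_ΔE, show (-(m'.1+m'.2) : ℤ) = l'.1 + l'.2 by omega]
  have hMF : LinearMap.toMatrix B2 B2 (ΔF l m) = M_F c a s := by
    rw [toMatrix_ΔF, show qn (m.1+m.2) = -qn (l.1+l.2) by
      rw [show (m.1+m.2 : ℤ) = -(l.1+l.2) by omega, qn_neg]]
    rfl
  have hMF' : LinearMap.toMatrix B2 B2 (ΔF l' m') = M_F c' a' s' := by
    rw [toMatrix_ΔF, show qn (m'.1+m'.2) = -qn (l'.1+l'.2) by
      rw [show (m'.1+m'.2 : ℤ) = -(l'.1+l'.2) by omega, qn_neg]]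
    rfl
  -- the isomorphism
  set Mff : Matrix (Fin 2 × Fin 2) (Fin 2 × Fin 2) F :=
    M_f γ (s*s') (a*s*(s*s') - a'*s'*γ) with hMff
  set Mgg : Matrix (Fin 2 × Fin 2) (Fin 2 × Fin 2) F :=
    M_f γ' (s*s') (a'*s'*(s*s') - a*s*γ') with hMgg
  have hfg : Mff * Mgg = 1 := keyInv a a' s s' γ γ' hs hs' hγγ'
  have hgf : Mgg * Mff = 1 := mul_eq_one_comm.mp hfg
  set f : V ⊗[F] V →ₗ[F] V ⊗[F] V := Matrix.toLin B2 B2 Mff with hf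
  set g : V ⊗[F] V →ₗ[F] V ⊗[F] V := Matrix.toLin B2 B2 Mgg with hg
  have hfmat : LinearMap.toMatrix B2 B2 f = Mff := by
    rw [hf, LinearMap.toMatrix_toLin]
  have hfgid : f ∘ₗ g = LinearMap.id := by
    rw [hf, hg, ← Matrix.toLin_mul B2 B2 B2, hfg, Matrix.toLin_one]
  have hgfid : g ∘ₗ f = LinearMap.id := by
    rw [hf, hg, ← Matrix.toLin_mul B2 B2 B2, hgf, Matrix.toLin_one]
  refine ⟨f, ?_, ?_, ?_, ?_⟩
  · refine Function.bijective_iff_has_inverse.mpr ⟨g, ?_, ?_⟩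
    · intro x
      exact DFunLike.congr_fun hgfid x
    · intro x
      exact DFunLike.congr_fun hfgid x
  · apply (LinearMap.toMatrix B2 B2).injective
    rw [LinearMap.toMatrix_comp B2 B2 B2, LinearMap.toMatrix_comp B2 B2 B2,
      hfmat, hME, hME']
    exact keyE a a' s s' γ hs hs'
  · apply (LinearMap.toMatrix B2 B2).injective
    rw [LinearMap.toMatrix_comp B2 B2 B2, LinearMap.toMatrix_comp B2 B2 B2,
      hfmat, hMF, hMF']
    exact keyF a a' s s' c c' γ hs hs' hγc
  · intro h
    apply (LinearMap.toMatrix B2 B2).injective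
    rw [LinearMap.toMatrix_comp B2 B2 B2, LinearMap.toMatrix_comp B2 B2 B2,
      hfmat, toMatrix_ΔQ, toMatrix_ΔQ]
    apply keyQ
    · rw [← zpow_add₀ q_ne_zero, ← zpow_add₀ q_ne_zero]
      congr 1
      linear_combination h.1*h1 + h.2*h2
    · rw [← zpow_add₀ q_ne_zero, ← zpow_add₀ q_ne_zero]
      congr 1
      linear_combination h.1*h1 + h.2*h2
    · rw [← zpow_add₀ q_ne_zero, ← zpow_add₀ q_ne_zero]
      congr 1
      linear_combination h.1*h1 + h.2*h2
    · rw [← zpow_add₀ q_ne_zero, ← zpow_add₀ q_ne_zero]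
      congr 1
      linear_combination h.1*h1 + h.2*h2
    · rw [← zpow_add₀ q_ne_zero, ← zpow_add₀ q_ne_zero]
      congr 1
      linear_combination h.1*h1 + h.2*h2
end
end

section
/- For every typical weight λ, the F-vector space of F-linear endomorphisms of L(λ)⊗L(λ) that commute with Δ(E), Δ(F) and with Δ(Q(h)) for all h ∈ ℤ² has dimension exactly 2. -/
set_option synthInstance.maxHeartbeats 1000000
set_option maxHeartbeats 1000000
noncomputable section
open scoped TensorProduct

instance : AddCommGroup (Module.End F (V ⊗[F] V)) := inferInstance
instance : Module F (Module.End F (V ⊗[F] V)) := inferInstance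

/-! ### Auxiliary material -/

instance : CharZero F := charZero_of_injective_algebraMap (algebraMap ℂ (RatFunc ℂ)).injective

lemma q_ne : (q : F) ≠ 0 := RatFunc.X_ne_zero

lemma qdeg_nat : ∀ n : ℕ, ((q : F) ^ n).intDegree = n := by
  intro n
  induction n with
  | zero => simp [RatFunc.intDegree_one]
  | succ n ih =>
    rw [pow_succ, RatFunc.intDegree_mul (pow_ne_zero _ q_ne) q_ne, ih]
    rw [show (q : F) = RatFunc.X from rfl, RatFunc.intDegree_X]; push_cast; ring

lemma qdeg : ∀ m : ℤ, ((q : F) ^ m).intDegree = m := by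
  intro m
  rcases le_or_gt 0 m with h | h
  · lift m to ℕ using h
    rw [zpow_natCast, qdeg_nat]
  · have h1 : (q : F) ^ m * q ^ (-m) = 1 := by
      rw [← zpow_add₀ q_ne]; simp
    have h2 := RatFunc.intDegree_mul (zpow_ne_zero m q_ne) (zpow_ne_zero (-m) q_ne)
      (x := (q : F) ^ m) (y := (q : F) ^ (-m))
    rw [h1, RatFunc.intDegree_one] at h2
    have h3 : ((q : F) ^ (-m)).intDegree = -m := by
      have hm : (0 : ℤ) ≤ -m := by omega
      lift (-m) to ℕ using hm with n hn
      rw [zpow_natCast, qdeg_nat]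
    omega

lemma qpow_inj {m n : ℤ} (h : (q : F) ^ m = q ^ n) : m = n := by
  have := congrArg RatFunc.intDegree h
  rwa [qdeg, qdeg] at this

lemma qpow_ne {m n : ℤ} (h : m ≠ n) : (q : F) ^ m ≠ q ^ n := fun hc => h (qpow_inj hc)

lemma qpow_ne_neg (m n : ℤ) : (q : F) ^ m ≠ -q ^ n := by
  intro hc
  have hd := congrArg RatFunc.intDegree hc
  rw [qdeg, RatFunc.intDegree_neg, qdeg] at hd
  subst hd
  have h2 : (2 : F) * q ^ m = 0 := by linear_combination hc
  have hq : (q : F) ^ m ≠ 0 := zpow_ne_zero _ q_ne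
  rcases mul_eq_zero.mp h2 with h | h
  · exact two_ne_zero h
  · exact hq h

open Matrix

abbrev ιT : Type := Fin 2 × Fin 2

def MEa (p k : F) : Matrix ιT ιT F :=
  kroneckerMap (· * ·) !![0, 1; 0, 0] !![k⁻¹, 0; 0, k⁻¹]
    + kroneckerMap (· * ·) !![p, 0; 0, -p] !![0, 1; 0, 0]

def MFa (p k f : F) : Matrix ιT ιT F :=
  kroneckerMap (· * ·) !![0, 0; f, 0] (1 : Matrix (Fin 2) (Fin 2) F)
    + kroneckerMap (· * ·) !![k * p, 0; 0, -(k * p)] !![0, 0; f, 0]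

def Da (c0 c1 : F) : Matrix ιT ιT F :=
  kroneckerMap (· * ·) !![c0, 0; 0, c1] !![c0, 0; 0, c1]

def Ta (p k : F) : Matrix ιT ιT F :=
  kroneckerMap (· * ·) !![-p * k⁻¹, 0; 0, 0] !![0, 0; 0, 1]
    + kroneckerMap (· * ·) !![0, 1; 0, 0] !![0, 0; 1, 0]
    + kroneckerMap (· * ·) !![0, 0; 1, 0] !![0, 1; 0, 0]
    + kroneckerMap (· * ·) !![0, 0; 0, -(k * p)] !![1, 0; 0, 0]
    + kroneckerMap (· * ·) !![0, 0; 0, -p * k⁻¹ - k * p] !![0, 0; 0, 1]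

lemma Ta_comm_E (p k : F) (hp : p = 1 ∨ p = -1) (hk : k ≠ 0) :
    MEa p k * Ta p k = Ta p k * MEa p k := by
  rcases hp with rfl | rfl <;>
  · ext ⟨i1, i2⟩ ⟨j1, j2⟩
    fin_cases i1 <;> fin_cases i2 <;> fin_cases j1 <;> fin_cases j2 <;>
      simp [MEa, Ta, Matrix.mul_apply, Fintype.sum_prod_type, Fin.sum_univ_two] <;>
      field_simp <;> ring

lemma Ta_comm_F (p k f : F) (hp : p = 1 ∨ p = -1) (hk : k ≠ 0) :
    MFa p k f * Ta p k = Ta p k * MFa p k f := by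
  rcases hp with rfl | rfl <;>
  · ext ⟨i1, i2⟩ ⟨j1, j2⟩
    fin_cases i1 <;> fin_cases i2 <;> fin_cases j1 <;> fin_cases j2 <;>
      simp [MFa, Ta, Matrix.mul_apply, Fintype.sum_prod_type, Fin.sum_univ_two,
        Matrix.one_apply] <;>
      field_simp <;> ring

lemma Ta_comm_D (p k c0 c1 : F) :
    Da c0 c1 * Ta p k = Ta p k * Da c0 c1 := by
  ext ⟨i1, i2⟩ ⟨j1, j2⟩
  fin_cases i1 <;> fin_cases i2 <;> fin_cases j1 <;> fin_cases j2 <;>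
    simp [Da, Ta, Matrix.mul_apply, Fintype.sum_prod_type, Fin.sum_univ_two] <;>
    ring

lemma entry_zero {x d e : F} (h : d * x = x * e) (hde : d ≠ e) : x = 0 := by
  have h2 : x * (d - e) = 0 := by linear_combination h
  rcases mul_eq_zero.mp h2 with h' | h'
  · exact h'
  · exact absurd (sub_eq_zero.mp h') hde

lemma solveA (p k f c0 c1 : F) (hp : p = 1 ∨ p = -1) (hk : k ≠ 0) (hf : f ≠ 0)
    (hc0 : c0 ≠ 0) (hc1 : c1 ≠ 0) (h01 : c0 ≠ c1) (h01' : c0 ≠ -c1)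
    (X : Matrix ιT ιT F)
    (hE : MEa p k * X = X * MEa p k) (hF : MFa p k f * X = X * MFa p k f)
    (hD : Da c0 c1 * X = X * Da c0 c1) :
    X = X (0, 0) (0, 0) • 1 + X (1, 0) (0, 1) • Ta p k := by
  have hp2 : p * p = 1 := by rcases hp with rfl | rfl <;> ring
  have hkk : k * k⁻¹ = 1 := mul_inv_cancel₀ hk
  have n1 : c0 * c0 ≠ c0 * c1 := fun h => h01 (mul_left_cancel₀ hc0 h)
  have n2 : c0 * c0 ≠ c1 * c1 := by
    intro h
    rcases mul_eq_zero.mp (show (c0 - c1) * (c0 + c1) = 0 by linear_combination h) with h' | h'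
    · exact h01 (sub_eq_zero.mp h')
    · exact h01' (eq_neg_of_add_eq_zero_left h')
  have n3 : c0 * c1 ≠ c1 * c1 := fun h => h01 (mul_right_cancel₀ hc1 h)
  have hDe : ∀ i j : ιT, Da c0 c1 i i * X i j = X i j * Da c0 c1 j j := by
    intro i j
    have h := congrFun (congrFun hD i) j
    rw [Matrix.mul_apply, Matrix.mul_apply] at h
    rw [Finset.sum_eq_single i, Finset.sum_eq_single j] at h
    · exact h
    · intro b _ hb
      have : Da c0 c1 b j = 0 := by
        revert hb; obtain ⟨b1, b2⟩ := b; obtain ⟨j1, j2⟩ := j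
        fin_cases b1 <;> fin_cases b2 <;> fin_cases j1 <;> fin_cases j2 <;>
          simp [Da]
      simp [this]
    · simp
    · intro b _ hb
      have : Da c0 c1 i b = 0 := by
        revert hb; obtain ⟨i1, i2⟩ := i; obtain ⟨b1, b2⟩ := b
        fin_cases i1 <;> fin_cases i2 <;> fin_cases b1 <;> fin_cases b2 <;>
          simp [Da]
      simp [this]
    · simp
  have z : ∀ i j : ιT, Da c0 c1 i i ≠ Da c0 c1 j j → X i j = 0 := fun i j hne =>
    entry_zero (hDe i j) hne
  have n1b : c0 * c0 ≠ c1 * c0 := fun h => h01 (mul_right_cancel₀ hc0 h)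
  have n3b : c1 * c0 ≠ c1 * c1 := fun h => h01 (mul_left_cancel₀ hc1 h)
  have z1 : X (0, 0) (0, 1) = 0 := z _ _ (by simpa [Da] using n1)
  have z2 : X (0, 0) (1, 0) = 0 := z _ _ (by simpa [Da] using n1b)
  have z3 : X (0, 0) (1, 1) = 0 := z _ _ (by simpa [Da] using n2)
  have z4 : X (0, 1) (0, 0) = 0 := z _ _ (by simpa [Da] using n1.symm)
  have z5 : X (0, 1) (1, 1) = 0 := z _ _ (by simpa [Da] using n3)
  have z6 : X (1, 0) (0, 0) = 0 := z _ _ (by simpa [Da] using n1b.symm)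
  have z7 : X (1, 0) (1, 1) = 0 := z _ _ (by simpa [Da] using n3b)
  have z8 : X (1, 1) (0, 0) = 0 := z _ _ (by simpa [Da] using n2.symm)
  have z9 : X (1, 1) (0, 1) = 0 := z _ _ (by simpa [Da] using n3.symm)
  have z10 : X (1, 1) (1, 0) = 0 := z _ _ (by simpa [Da] using n3b.symm)
  have e1 := congrFun (congrFun hE (0, 0)) (0, 1)
  have f1 := congrFun (congrFun hF (0, 1)) (0, 0)
  have f2 := congrFun (congrFun hF (1, 0)) (0, 0)
  have f3 := congrFun (congrFun hF (1, 1)) (0, 1)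
  simp [MEa, MFa, Matrix.mul_apply, Fintype.sum_prod_type, Fin.sum_univ_two,
    Matrix.one_apply] at e1 f1 f2 f3
  have f1' : k * p * X (0, 0) (0, 0) = X (0, 1) (0, 1) * (k * p) + X (0, 1) (1, 0) :=
    mul_left_cancel₀ hf (by linear_combination f1)
  have f2' : X (0, 0) (0, 0) = X (1, 0) (0, 1) * (k * p) + X (1, 0) (1, 0) :=
    mul_left_cancel₀ hf (by linear_combination f2)
  have f3' : X (0, 1) (0, 1) - k * p * X (1, 0) (0, 1) = X (1, 1) (1, 1) :=
    mul_left_cancel₀ hf (by linear_combination f3)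
  apply Matrix.ext_iff.mp
  intro i j
  obtain ⟨i1, i2⟩ := i; obtain ⟨j1, j2⟩ := j
  fin_cases i1 <;> fin_cases i2 <;> fin_cases j1 <;> fin_cases j2 <;>
    simp only [Ta, Matrix.add_apply, Matrix.smul_apply, Matrix.one_apply,
      Matrix.kroneckerMap_apply, smul_eq_mul, Matrix.cons_val', Matrix.cons_val_zero,
      Matrix.cons_val_one, Matrix.head_cons, Matrix.head_fin_const, Matrix.empty_val',
      Matrix.cons_val_fin_one, Matrix.of_apply] <;>
    norm_num [Prod.ext_iff] <;>
    first
      | rfl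
      | exact z1 | exact z2 | exact z3 | exact z4 | exact z5
      | exact z6 | exact z7 | exact z8 | exact z9 | exact z10
      | linear_combination p * e1 + (X (0, 0) (0, 0) - X (0, 1) (0, 1)) * hp2
      | linear_combination -f1' - k * e1 + X (1, 0) (0, 1) * hkk
      | linear_combination -f2'
      | linear_combination -f3' + p * e1 + (X (0, 0) (0, 0) - X (0, 1) (0, 1)) * hp2

lemma matrix_centralizer_eq (p k f : F) (c0 c1 : ℤ × ℤ → F)
    (hp : p = 1 ∨ p = -1) (hk : k ≠ 0) (hf : f ≠ 0)
    (hex : ∃ h0 : ℤ × ℤ, c0 h0 ≠ 0 ∧ c1 h0 ≠ 0 ∧ c0 h0 ≠ c1 h0 ∧ c0 h0 ≠ -c1 h0) :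
    Subalgebra.toSubmodule
        (Subalgebra.centralizer F
          (({MEa p k, MFa p k f} ∪ Set.range fun h => Da (c0 h) (c1 h)) :
            Set (Matrix ιT ιT F)))
      = Submodule.span F {1, Ta p k} := by
  apply le_antisymm
  · intro X hX
    rw [Subalgebra.mem_toSubmodule, Subalgebra.mem_centralizer_iff] at hX
    obtain ⟨h0, h1, h2, h3, h4⟩ := hex
    have hE := hX (MEa p k) (Set.mem_union_left _ (Set.mem_insert _ _))
    have hF := hX (MFa p k f)
      (Set.mem_union_left _ (Set.mem_insert_of_mem _ (Set.mem_singleton _)))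
    have hD := hX (Da (c0 h0) (c1 h0)) (Set.mem_union_right _ ⟨h0, rfl⟩)
    rw [solveA p k f (c0 h0) (c1 h0) hp hk hf h1 h2 h3 h4 X hE hF hD]
    exact Submodule.add_mem _
      (Submodule.smul_mem _ _ (Submodule.subset_span (Set.mem_insert _ _)))
      (Submodule.smul_mem _ _ (Submodule.subset_span
        (Set.mem_insert_of_mem _ (Set.mem_singleton _))))
  · rw [Submodule.span_le]
    rintro x hx
    simp only [Set.mem_insert_iff, Set.mem_singleton_iff] at hx
    rw [SetLike.mem_coe, Subalgebra.mem_toSubmodule, Subalgebra.mem_centralizer_iff]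
    rcases hx with rfl | rfl
    · intro g _; rw [mul_one, one_mul]
    · rintro g (hg | ⟨h0, rfl⟩)
      · simp only [Set.mem_insert_iff, Set.mem_singleton_iff] at hg
        rcases hg with rfl | rfl
        · exact Ta_comm_E p k hp hk
        · exact Ta_comm_F p k f hp hk
      · exact Ta_comm_D p k (c0 h0) (c1 h0)

lemma Ta_indep (p k : F) :
    LinearIndependent F ![(1 : Matrix ιT ιT F), Ta p k] := by
  rw [linearIndependent_fin2]
  constructor
  · intro h
    have := congrFun (congrFun (show Ta p k = 0 by simpa using h) ((0 : Fin 2), (1 : Fin 2)))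
      ((1 : Fin 2), (0 : Fin 2))
    simp [Ta] at this
  · intro a h
    have := congrFun (congrFun h ((0 : Fin 2), (0 : Fin 2))) ((0 : Fin 2), (0 : Fin 2))
    simp [Ta, Matrix.smul_apply, Matrix.one_apply] at this

lemma finrank_span_pair (p k : F) :
    Module.finrank F (Submodule.span F ({1, Ta p k} : Set (Matrix ιT ιT F))) = 2 := by
  have hr : Set.range ![(1 : Matrix ιT ιT F), Ta p k] = {1, Ta p k} := by
    ext x
    simp [Fin.exists_fin_two]
    tauto
  rw [← hr, finrank_span_eq_card (Ta_indep p k)]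
  simp

/-! ### Computation of the matrices of the operators -/

def bV : Module.Basis (Fin 2) F V := Pi.basisFun F (Fin 2)
def BB : Module.Basis ιT F (V ⊗[F] V) := bV.tensorProduct bV
def φm : Module.End F (V ⊗[F] V) ≃ₐ[F] Matrix ιT ιT F := LinearMap.toMatrixAlgEquiv BB

def pp (l : ℤ × ℤ) : F := (-1 : F) ^ l.2
def kk (l : ℤ × ℤ) : F := q ^ (l.1 + l.2)

lemma φm_apply (x : Module.End F (V ⊗[F] V)) :
    φm x = LinearMap.toMatrix BB BB x := rfl

lemma toMatrix_map (f g : V →ₗ[F] V) :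
    LinearMap.toMatrix BB BB (TensorProduct.map f g)
      = kroneckerMap (· * ·) (LinearMap.toMatrix' f) (LinearMap.toMatrix' g) := by
  rw [BB, TensorProduct.toMatrix_map, bV, LinearMap.toMatrix_eq_toMatrix']

lemma toMatrix'_Pop (l : ℤ × ℤ) :
    LinearMap.toMatrix' (Pop l) = !![pp l, 0; 0, -pp l] := by
  rw [Pop, LinearMap.toMatrix'_toLin']
  ext i j
  fin_cases i <;> fin_cases j <;>
    simp [pp] <;>
    rw [zpow_add₀ (by norm_num : (-1 : F) ≠ 0), zpow_one] <;> ring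

lemma φm_ΔE (l : ℤ × ℤ) : φm (ΔE l l) = MEa (pp l) (kk l) := by
  have h1 : LinearMap.toMatrix' (Kinv l) = !![(kk l)⁻¹, 0; 0, (kk l)⁻¹] := by
    rw [Kinv, Qop, LinearMap.toMatrix'_toLin']
    ext i j
    fin_cases i <;> fin_cases j <;>
      simp [kk] <;>
      rw [← _root_.zpow_neg] <;> congr 1 <;> ring
  have h3 : LinearMap.toMatrix' Eop = !![0, 1; 0, 0] := by
    rw [Eop, LinearMap.toMatrix'_toLin']
  rw [φm_apply, ΔE, map_add, toMatrix_map, toMatrix_map, h1, toMatrix'_Pop, h3, MEa]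

lemma φm_ΔF (l : ℤ × ℤ) : φm (ΔF l l) = MFa (pp l) (kk l) (qn (l.1 + l.2)) := by
  have h4 : LinearMap.toMatrix' (Fop l) = !![0, 0; qn (l.1 + l.2), 0] := by
    rw [Fop, LinearMap.toMatrix'_toLin']
  have h5 : LinearMap.toMatrix' (Kop l ∘ₗ Pop l) = !![kk l * pp l, 0; 0, -(kk l * pp l)] := by
    rw [LinearMap.toMatrix'_comp, Kop, Qop, LinearMap.toMatrix'_toLin', toMatrix'_Pop]
    ext i j
    fin_cases i <;> fin_cases j <;>
      simp [Matrix.mul_apply, Fin.sum_univ_two, kk]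
  rw [φm_apply, ΔF, map_add, toMatrix_map, toMatrix_map, h4, h5, LinearMap.toMatrix'_id, MFa]

lemma φm_ΔQ (l h : ℤ × ℤ) : φm (ΔQ l l h)
    = Da (q ^ (h.1 * l.1 + h.2 * l.2)) (q ^ (h.1 * (l.1 - 1) + h.2 * (l.2 + 1))) := by
  rw [φm_apply, ΔQ, toMatrix_map, Qop, LinearMap.toMatrix'_toLin', Da]

/-- the space of `U_q(gl(1|1))`-equivariant endomorphisms of
`L(λ)⊗L(λ)` is two-dimensional. -/
theorem endomorphism_algebra_dim (l : ℤ × ℤ) (hl : l.1 + l.2 ≠ 0) :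
    Module.finrank F
      (Subalgebra.toSubmodule
        (Subalgebra.centralizer F
          (({ΔE l l, ΔF l l} ∪ Set.range (ΔQ l l)) : Set (Module.End F (V ⊗[F] V))))) = 2 := by
  set S : Set (Module.End F (V ⊗[F] V)) := {ΔE l l, ΔF l l} ∪ Set.range (ΔQ l l) with hS
  have himg : φm '' S
      = ({MEa (pp l) (kk l), MFa (pp l) (kk l) (qn (l.1 + l.2))} ∪
          Set.range fun h : ℤ × ℤ => Da (q ^ (h.1 * l.1 + h.2 * l.2))
            (q ^ (h.1 * (l.1 - 1) + h.2 * (l.2 + 1)))) := by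
    rw [hS, Set.image_union, Set.image_insert_eq, Set.image_singleton, φm_ΔE, φm_ΔF,
      ← Set.range_comp]
    congr 1
    exact congrArg Set.range (funext fun h => φm_ΔQ l h)
  have hmem : ∀ x, x ∈ Subalgebra.centralizer F S ↔
      φm x ∈ Subalgebra.centralizer F (φm '' S) := by
    intro x
    simp only [Subalgebra.mem_centralizer_iff]
    constructor
    · rintro hx y ⟨g, hg, rfl⟩
      rw [← _root_.map_mul, ← _root_.map_mul, hx g hg]
    · intro hx g hg
      have := hx (φm g) ⟨g, hg, rfl⟩
      rw [← _root_.map_mul, ← _root_.map_mul] at this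
      exact φm.injective this
  have hcomap : Subalgebra.toSubmodule (Subalgebra.centralizer F S)
      = Submodule.comap (φm.toLinearEquiv : Module.End F (V ⊗[F] V) →ₗ[F] Matrix ιT ιT F)
          (Subalgebra.toSubmodule (Subalgebra.centralizer F (φm '' S))) := by
    ext x
    simp only [Subalgebra.mem_toSubmodule, Submodule.mem_comap]
    exact hmem x
  rw [hcomap, Submodule.comap_equiv_eq_map_symm]
  rw [LinearEquiv.finrank_map_eq]
  have hp : pp l = 1 ∨ pp l = -1 := by
    rcases Int.even_or_odd l.2 with h | h
    · left; exact h.neg_one_zpow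
    · right; exact h.neg_one_zpow
  have hk : kk l ≠ 0 := zpow_ne_zero _ q_ne
  have hf : qn (l.1 + l.2) ≠ 0 := by
    rw [qn]
    apply div_ne_zero
    · exact sub_ne_zero.2 (qpow_ne (by omega))
    · have : (q : F) - q⁻¹ = q ^ (1 : ℤ) - q ^ (-1 : ℤ) := by
        rw [zpow_one, _root_.zpow_neg, zpow_one]
      rw [this]
      exact sub_ne_zero.2 (qpow_ne (by norm_num))
  rw [himg, matrix_centralizer_eq (pp l) (kk l) (qn (l.1 + l.2))
    (fun h => q ^ (h.1 * l.1 + h.2 * l.2)) (fun h => q ^ (h.1 * (l.1 - 1) + h.2 * (l.2 + 1)))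
    hp hk hf ⟨(1, 0), zpow_ne_zero _ q_ne, zpow_ne_zero _ q_ne,
      qpow_ne (by omega), qpow_ne_neg _ _⟩]
  exact finrank_span_pair (pp l) (kk l)
end
end
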